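/- (Existence of a coverage-matching amplitude, upper-quantile case.) Assume Hypothesis H2, σ_ε² > 0, a ∈ (1/2, 1), q > 0, and 0 < δ < q. Set k_ε = Card{ i ∈ {1,…,n} : (Πy)ᵢ/√(Πᵢᵢ) ≤ σ_ε q }. If k_ε < na, then there exists σ² ∈ (0,∞) such that ψ⁺_δ(σ²) = a. -/

import Mathlib

open Matrix

/-- The matrix `K̄ = K⁻¹ − K⁻¹F(FᵀK⁻¹F)⁻¹FᵀK⁻¹`. -/
noncomputable def Kbar {n p : ℕ} (F : Matrix (Fin n) (Fin p) ℝ)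
    (K : Matrix (Fin n) (Fin n) ℝ) : Matrix (Fin n) (Fin n) ℝ :=
  K⁻¹ - K⁻¹ * F * (Fᵀ * K⁻¹ * F)⁻¹ * Fᵀ * K⁻¹

/-- `h⁺_δ(x) = 1` if `x > δ`, `x/δ` if `0 < x ≤ δ`, `0` if `x ≤ 0`. -/
noncomputable def hplus (δ x : ℝ) : ℝ :=
  if δ < x then 1 else if 0 < x then x / δ else 0

/-- `ψ⁺_δ(K) = (1/n) Σᵢ h⁺_δ(q − (K̄y)ᵢ/√(K̄ᵢᵢ))`. -/
noncomputable def psiPlus {n p : ℕ} (F : Matrix (Fin n) (Fin p) ℝ)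
    (y : Fin n → ℝ) (δ q : ℝ) (K : Matrix (Fin n) (Fin n) ℝ) : ℝ :=
  (1 / n) * ∑ i, hplus δ (q - (Kbar F K *ᵥ y) i / Real.sqrt (Kbar F K i i))

variable {n p : ℕ} {F : Matrix (Fin n) (Fin p) ℝ} {K : Matrix (Fin n) (Fin n) ℝ}

lemma posDef_smul {c : ℝ} (hc : 0 < c) (hK : K.PosDef) : (c • K).PosDef := by
  refine posDef_iff_dotProduct_mulVec.mpr ⟨?_, fun x hx => ?_⟩
  · show (c • K)ᴴ = c • K
    rw [conjTranspose_smul, star_trivial, hK.1.eq]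
  · show 0 < star x ⬝ᵥ ((c • K) *ᵥ x)
    rw [smul_mulVec, dotProduct_smul, smul_eq_mul]
    exact mul_pos hc (hK.dotProduct_mulVec_pos hx)

lemma posSemidef_smul {c : ℝ} (hc : 0 ≤ c) (hK : K.PosSemidef) : (c • K).PosSemidef := by
  refine posSemidef_iff_dotProduct_mulVec.mpr ⟨?_, fun x => ?_⟩
  · show (c • K)ᴴ = c • K
    rw [conjTranspose_smul, star_trivial, hK.1.eq]
  · show 0 ≤ star x ⬝ᵥ ((c • K) *ᵥ x)
    rw [smul_mulVec, dotProduct_smul, smul_eq_mul]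
    exact mul_nonneg hc (hK.dotProduct_mulVec_nonneg x)

lemma F_inj (hF : F.rank = p) {v : Fin p → ℝ} (hv : F *ᵥ v = 0) : v = 0 := by
  have hker : LinearMap.ker F.mulVecLin = ⊥ := by
    have h := F.mulVecLin.finrank_range_add_finrank_ker
    rw [show Module.finrank ℝ (LinearMap.range F.mulVecLin) = p from hF] at h
    simp only [Module.finrank_fintype_fun_eq_card, Fintype.card_fin] at h
    have : Module.finrank ℝ (LinearMap.ker F.mulVecLin) = 0 := by omega
    exact Submodule.finrank_eq_zero.mp this
  have := LinearMap.ker_eq_bot.mp hker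
  exact this (by simpa [Matrix.mulVecLin_apply] using hv)

lemma M_posDef (hF : F.rank = p) (hK : K.PosDef) : (Fᵀ * K⁻¹ * F).PosDef := by
  have hKi : K⁻¹.PosDef := hK.inv
  rw [posDef_iff_dotProduct_mulVec]; constructor
  · have hsym : K⁻¹ᵀ = K⁻¹ := hKi.1
    show (Fᵀ * K⁻¹ * F)ᴴ = _
    rw [conjTranspose_eq_transpose_of_trivial]
    rw [transpose_mul, transpose_mul, transpose_transpose, hsym, ← Matrix.mul_assoc]
  · intro x hx
    have hFx : F *ᵥ x ≠ 0 := fun h => hx (F_inj hF h)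
    have key : star x ⬝ᵥ ((Fᵀ * K⁻¹ * F) *ᵥ x) = star (F *ᵥ x) ⬝ᵥ (K⁻¹ *ᵥ (F *ᵥ x)) := by
      simp only [star_trivial, ← mulVec_mulVec]
      rw [dotProduct_mulVec, vecMul_transpose]
    rw [key]
    exact hKi.dotProduct_mulVec_pos hFx

lemma Kbar_mul_F (hF : F.rank = p) (hK : K.PosDef) : Kbar F K * F = 0 := by
  have hM : ((Fᵀ * K⁻¹ * F)⁻¹) * (Fᵀ * K⁻¹ * F) = 1 :=
    Matrix.nonsing_inv_mul _ (M_posDef hF hK).det_pos.ne'.isUnit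
  rw [Kbar, Matrix.sub_mul]
  simp only [Matrix.mul_assoc] at hM ⊢
  rw [hM, Matrix.mul_one, sub_self]

lemma Kbar_transpose (hK : K.PosDef) : (Kbar F K)ᵀ = Kbar F K := by
  have h1 : K⁻¹ᵀ = K⁻¹ := by
    have := hK.inv.1.eq
    rwa [conjTranspose_eq_transpose_of_trivial] at this
  have h2 : ((Fᵀ * K⁻¹ * F)⁻¹)ᵀ = (Fᵀ * K⁻¹ * F)⁻¹ := by
    rw [Matrix.transpose_nonsing_inv]
    congr 1
    rw [transpose_mul, transpose_mul, transpose_transpose, h1, ← Matrix.mul_assoc]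
  rw [Kbar, transpose_sub, h1, transpose_mul, transpose_mul, transpose_mul, transpose_mul]
  rw [h1, h2, transpose_transpose]
  simp only [Matrix.mul_assoc]

lemma K_mul_Kbar (hK : K.PosDef) :
    K * Kbar F K = 1 - F * ((Fᵀ * K⁻¹ * F)⁻¹ * (Fᵀ * K⁻¹)) := by
  have hKdet : IsUnit K.det := hK.det_pos.ne'.isUnit
  have hKK : K * K⁻¹ = 1 := Matrix.mul_nonsing_inv _ hKdet
  rw [Kbar, Matrix.mul_sub, hKK]
  congr 1
  rw [show K⁻¹ * F * (Fᵀ * K⁻¹ * F)⁻¹ * Fᵀ * K⁻¹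
      = K⁻¹ * (F * ((Fᵀ * K⁻¹ * F)⁻¹ * (Fᵀ * K⁻¹))) by simp only [Matrix.mul_assoc],
    ← Matrix.mul_assoc, hKK, Matrix.one_mul]

lemma Kbar_K_Kbar (hF : F.rank = p) (hK : K.PosDef) :
    Kbar F K * K * Kbar F K = Kbar F K := by
  rw [Matrix.mul_assoc, K_mul_Kbar hK, Matrix.mul_sub, Matrix.mul_one,
    ← Matrix.mul_assoc, Kbar_mul_F hF hK, Matrix.zero_mul, sub_zero]

lemma Kbar_kernel (hK : K.PosDef) {x : Fin n → ℝ} (hx : Kbar F K *ᵥ x = 0) :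
    ∃ v, F *ᵥ v = x := by
  have hKdet : IsUnit K.det := hK.det_pos.ne'.isUnit
  have hKK : K * K⁻¹ = 1 := Matrix.mul_nonsing_inv _ hKdet
  refine ⟨((Fᵀ * K⁻¹ * F)⁻¹ * (Fᵀ * K⁻¹)) *ᵥ x, ?_⟩
  have h1 : K⁻¹ *ᵥ x = (K⁻¹ * F * (Fᵀ * K⁻¹ * F)⁻¹ * Fᵀ * K⁻¹) *ᵥ x := by
    have h := hx
    rw [Kbar, Matrix.sub_mulVec] at h
    exact sub_eq_zero.mp h
  have h2 : K *ᵥ (K⁻¹ *ᵥ x) = x := by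
    rw [Matrix.mulVec_mulVec, hKK, Matrix.one_mulVec]
  rw [h1, Matrix.mulVec_mulVec] at h2
  have h3 : K * (K⁻¹ * F * (Fᵀ * K⁻¹ * F)⁻¹ * Fᵀ * K⁻¹)
      = F * ((Fᵀ * K⁻¹ * F)⁻¹ * (Fᵀ * K⁻¹)) := by
    rw [show K⁻¹ * F * (Fᵀ * K⁻¹ * F)⁻¹ * Fᵀ * K⁻¹
        = K⁻¹ * (F * ((Fᵀ * K⁻¹ * F)⁻¹ * (Fᵀ * K⁻¹))) by simp only [Matrix.mul_assoc],
      ← Matrix.mul_assoc, hKK, Matrix.one_mul]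
  rw [h3] at h2
  rw [Matrix.mulVec_mulVec]
  exact h2

lemma Kbar_diag_pos (hF : F.rank = p) (hK : K.PosDef) {i : Fin n}
    (hi : Pi.single i (1 : ℝ) ∉ LinearMap.range (Matrix.mulVecLin F)) :
    0 < Kbar F K i i := by
  set B := Kbar F K with hB
  set e : Fin n → ℝ := Pi.single i 1 with he
  have hz : B *ᵥ e ≠ 0 := by
    intro h
    obtain ⟨v, hv⟩ := Kbar_kernel hK h
    exact hi ⟨v, by simpa [Matrix.mulVecLin_apply] using hv⟩
  have key : B i i = (B *ᵥ e) ⬝ᵥ (K *ᵥ (B *ᵥ e)) := by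
    have h1 : B i i = e ⬝ᵥ ((B * K * B) *ᵥ e) := by
      rw [Kbar_K_Kbar hF hK]
      simp [he, hB, Matrix.mulVec_single, single_dotProduct]
    rw [h1, ← Matrix.mulVec_mulVec, ← Matrix.mulVec_mulVec, Matrix.dotProduct_mulVec]
    congr 1
    rw [hB]
    nth_rewrite 1 [← Kbar_transpose hK]
    rw [Matrix.vecMul_transpose]
  rw [key]
  have := hK.dotProduct_mulVec_pos hz
  rwa [star_trivial] at this

lemma Kbar_smul (hF : F.rank = p) {c : ℝ} (hc : 0 < c) (hK : K.PosDef) :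
    Kbar F (c • K) = c⁻¹ • Kbar F K := by
  have hKdet : IsUnit K.det := hK.det_pos.ne'.isUnit
  have hMdet : IsUnit (Fᵀ * K⁻¹ * F).det := (M_posDef hF hK).det_pos.ne'.isUnit
  have h1 : (c • K)⁻¹ = c⁻¹ • K⁻¹ := Matrix.inv_eq_right_inv (by
    rw [Matrix.smul_mul, Matrix.mul_smul, smul_smul, mul_inv_cancel₀ hc.ne', one_smul,
      Matrix.mul_nonsing_inv _ hKdet])
  have h3 : (Fᵀ * (c • K)⁻¹ * F)⁻¹ = c • (Fᵀ * K⁻¹ * F)⁻¹ := by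
    rw [h1, Matrix.mul_smul, Matrix.smul_mul]
    exact Matrix.inv_eq_right_inv (by
      rw [Matrix.smul_mul, Matrix.mul_smul, smul_smul, inv_mul_cancel₀ hc.ne', one_smul,
        Matrix.mul_nonsing_inv _ hMdet])
  rw [Kbar, Kbar, h3, h1]
  simp only [Matrix.smul_mul, Matrix.mul_smul, smul_smul, smul_sub]
  congr 2
  field_simp

lemma Kbar_one : Kbar F (1 : Matrix (Fin n) (Fin n) ℝ) = 1 - F * (Fᵀ * F)⁻¹ * Fᵀ := by
  simp only [Kbar, inv_one, Matrix.mul_one, Matrix.one_mul]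

theorem ContinuousAt.matMul {X : Type*} [TopologicalSpace X] {l m r : ℕ}
    {A : X → Matrix (Fin l) (Fin m) ℝ} {B : X → Matrix (Fin m) (Fin r) ℝ} {x : X}
    (hA : ContinuousAt A x) (hB : ContinuousAt B x) :
    ContinuousAt (fun x => A x * B x) x := by
  apply continuousAt_pi.2; intro i; apply continuousAt_pi.2; intro j
  simp only [Matrix.mul_apply]
  apply tendsto_finset_sum
  intro k _
  exact (continuousAt_pi.1 (continuousAt_pi.1 hA i) k).mul
    (continuousAt_pi.1 (continuousAt_pi.1 hB k) j)

theorem continuousAt_Kbar (hF : F.rank = p) (hK : K.PosDef) :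
    ContinuousAt (fun A => Kbar F A) K := by
  have hKdet : K.det ≠ 0 := hK.det_pos.ne'
  have hInv : ContinuousAt (fun A : Matrix (Fin n) (Fin n) ℝ => A⁻¹) K := by
    apply continuousAt_matrix_inv
    rw [Ring.inverse_eq_inv']
    exact continuousAt_inv₀ hKdet
  have hMdet : (Fᵀ * K⁻¹ * F).det ≠ 0 := (M_posDef hF hK).det_pos.ne'
  have hM : ContinuousAt (fun A : Matrix (Fin n) (Fin n) ℝ => Fᵀ * A⁻¹ * F) K :=
    (continuousAt_const.matMul hInv).matMul continuousAt_const
  have hMinvAt : ContinuousAt (fun B : Matrix (Fin p) (Fin p) ℝ => B⁻¹) (Fᵀ * K⁻¹ * F) := by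
    apply continuousAt_matrix_inv
    rw [Ring.inverse_eq_inv']
    exact continuousAt_inv₀ hMdet
  have hMinv : ContinuousAt (fun A : Matrix (Fin n) (Fin n) ℝ => (Fᵀ * A⁻¹ * F)⁻¹) K := by
    have := ContinuousAt.comp (f := fun A : Matrix (Fin n) (Fin n) ℝ => Fᵀ * A⁻¹ * F)
      hMinvAt hM
    simpa [Function.comp_def] using this
  exact hInv.sub ((((hInv.matMul continuousAt_const).matMul hMinv).matMul
    continuousAt_const).matMul hInv)

lemma hplus_eq {δ : ℝ} (hδ : 0 < δ) (x : ℝ) : hplus δ x = max 0 (min 1 (x / δ)) := by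
  unfold hplus
  split_ifs with h1 h2
  · rw [min_eq_left (by rw [le_div_iff₀ hδ]; linarith), max_eq_right zero_le_one]
  · rw [min_eq_right (by rw [div_le_one hδ]; linarith), max_eq_right (by positivity)]
  · push_neg at h2
    rw [max_eq_left (min_le_of_right_le (div_nonpos_of_nonpos_of_nonneg h2 hδ.le))]

lemma continuous_hplus {δ : ℝ} (hδ : 0 < δ) : Continuous (hplus δ) := by
  have : hplus δ = fun x => max 0 (min 1 (x / δ)) := funext (hplus_eq hδ)
  rw [this]
  fun_prop

lemma hplus_nonneg {δ : ℝ} (hδ : 0 < δ) (x : ℝ) : 0 ≤ hplus δ x := by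
  rw [hplus_eq hδ]; exact le_max_left _ _

lemma hplus_le_one {δ : ℝ} (hδ : 0 < δ) (x : ℝ) : hplus δ x ≤ 1 := by
  rw [hplus_eq hδ]
  apply max_le (by norm_num) (min_le_left _ _)

lemma hplus_of_nonpos {δ x : ℝ} (hδ : 0 < δ) (hx : x ≤ 0) : hplus δ x = 0 := by
  unfold hplus
  split_ifs with h1 h2 <;> [linarith; linarith; rfl]

lemma hplus_of_gt {δ x : ℝ} (hx : δ < x) : hplus δ x = 1 := if_pos hx

lemma ratio_continuousAt (hF : F.rank = p) {κ : ℝ → Matrix (Fin n) (Fin n) ℝ} {s₀ : ℝ}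
    {i : Fin n} (hκ : Continuous κ) (hpd : (κ s₀).PosDef) (hd : 0 < Kbar F (κ s₀) i i)
    (y : Fin n → ℝ) :
    ContinuousAt (fun s => (Kbar F (κ s) *ᵥ y) i / Real.sqrt (Kbar F (κ s) i i)) s₀ := by
  have hKb : ContinuousAt (fun s => Kbar F (κ s)) s₀ := by
    have := ContinuousAt.comp (f := κ) (continuousAt_Kbar hF hpd) hκ.continuousAt
    simpa [Function.comp_def] using this
  have hentry : ∀ j : Fin n, ContinuousAt (fun s => Kbar F (κ s) i j) s₀ := fun j =>
    continuousAt_pi.1 (continuousAt_pi.1 hKb i) j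
  have h1 : ContinuousAt (fun s => (Kbar F (κ s) *ᵥ y) i) s₀ := by
    simp only [Matrix.mulVec, dotProduct]
    exact tendsto_finset_sum _ fun j _ => (hentry j).mul continuousAt_const
  have h2 : ContinuousAt (fun s => Real.sqrt (Kbar F (κ s) i i)) s₀ := by
    have := ContinuousAt.comp (f := fun s => Kbar F (κ s) i i)
      Real.continuous_sqrt.continuousAt (hentry i)
    simpa [Function.comp_def] using this
  exact h1.div h2 (Real.sqrt_pos.2 hd).ne'

/-- Existence of a coverage-matching amplitude (upper-quantile case):
if `k_ε = #{i : (Πy)ᵢ/√(Πᵢᵢ) ≤ σ_ε q} < na`, then `ψ⁺_δ(σ²) = a` for some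
`σ² > 0`, where `K(σ²) = σ²R + σ_ε²Iₙ`. -/
theorem stmt11 (n p : ℕ) (hp : 0 < p) (hpn : p < n)
    (F : Matrix (Fin n) (Fin p) ℝ) (hF : F.rank = p)
    (hH2 : ∀ i : Fin n, Pi.single i (1 : ℝ) ∉ LinearMap.range (Matrix.mulVecLin F))
    (y : Fin n → ℝ) (R : Matrix (Fin n) (Fin n) ℝ) (hR : R.PosDef)
    (sigeps : ℝ) (hsig : 0 < sigeps)
    (a : ℝ) (ha : a ∈ Set.Ioo (1 / 2 : ℝ) 1)
    (q : ℝ) (hq : 0 < q) (δ : ℝ) (hδ : 0 < δ) (hδq : δ < q)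
    (hke : ((Finset.univ.filter fun i : Fin n =>
        (((1 : Matrix (Fin n) (Fin n) ℝ) - F * (Fᵀ * F)⁻¹ * Fᵀ) *ᵥ y) i /
          Real.sqrt (((1 : Matrix (Fin n) (Fin n) ℝ) - F * (Fᵀ * F)⁻¹ * Fᵀ) i i)
          ≤ sigeps * q).card : ℝ) < n * a) :
    ∃ s : ℝ, 0 < s ∧
      psiPlus F y δ q (s • R + (sigeps ^ 2) • (1 : Matrix (Fin n) (Fin n) ℝ)) = a := by
  obtain ⟨ha1, ha2⟩ := ha
  have hn : 0 < n := lt_trans hp hpn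
  have hnR : (0 : ℝ) < n := by exact_mod_cast hn
  have hσ2pos : (0 : ℝ) < sigeps ^ 2 := by positivity
  set KK : ℝ → Matrix (Fin n) (Fin n) ℝ := fun s => s • R + (sigeps ^ 2) • 1 with hKK
  have hKKpd : ∀ s : ℝ, 0 ≤ s → (KK s).PosDef := fun s hs =>
    Matrix.PosDef.posSemidef_add (posSemidef_smul hs hR.posSemidef)
      (posDef_smul hσ2pos Matrix.PosDef.one)
  have hdiag : ∀ s : ℝ, 0 ≤ s → ∀ i, 0 < Kbar F (KK s) i i := fun s hs i =>
    Kbar_diag_pos hF (hKKpd s hs) (hH2 i)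
  set ρ : Fin n → ℝ → ℝ :=
    fun i s => (Kbar F (KK s) *ᵥ y) i / Real.sqrt (Kbar F (KK s) i i) with hρ
  set φ : ℝ → ℝ := fun s => (1 / (n : ℝ)) * ∑ i, hplus δ (q - ρ i s) with hφ
  have hKKcont : Continuous KK := by
    apply Continuous.add
    · exact continuous_id.smul continuous_const
    · exact continuous_const
  have hφcont : ∀ s : ℝ, 0 ≤ s → ContinuousAt φ s := by
    intro s hs
    apply ContinuousAt.mul continuousAt_const
    apply tendsto_finset_sum
    intro i _
    have hr : ContinuousAt (fun t => q - ρ i t) s :=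
      continuousAt_const.sub (ratio_continuousAt hF hKKcont (hKKpd s hs) (hdiag s hs i) y)
    have := ContinuousAt.comp (f := fun t => q - ρ i t)
      (continuous_hplus hδ).continuousAt hr
    exact this
  -- value at 0
  set P : Matrix (Fin n) (Fin n) ℝ := 1 - F * (Fᵀ * F)⁻¹ * Fᵀ with hP
  have hKbar0 : Kbar F (KK 0) = (sigeps ^ 2)⁻¹ • P := by
    have h0 : KK 0 = (sigeps ^ 2) • (1 : Matrix (Fin n) (Fin n) ℝ) := by
      simp [hKK]
    rw [h0, Kbar_smul hF hσ2pos Matrix.PosDef.one, Kbar_one]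
  have hPd : ∀ i, 0 < P i i := by
    intro i
    have := hdiag 0 le_rfl i
    rw [hKbar0] at this
    simp only [Matrix.smul_apply, smul_eq_mul] at this
    nlinarith [this, inv_pos.2 hσ2pos]
  have hρ0 : ∀ i, ρ i 0 = sigeps⁻¹ * ((P *ᵥ y) i / Real.sqrt (P i i)) := by
    intro i
    rw [hρ]
    simp only [hKbar0, smul_mulVec, Pi.smul_apply, smul_eq_mul, Matrix.smul_apply]
    rw [Real.sqrt_mul (by positivity), Real.sqrt_inv, Real.sqrt_sq hsig.le]
    have hB : Real.sqrt (P i i) ≠ 0 := (Real.sqrt_pos.2 (hPd i)).ne'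
    field_simp
  have hφ0 : φ 0 < a := by
    have hsum : ∑ i, hplus δ (q - ρ i 0) ≤
        ((Finset.univ.filter fun i : Fin n =>
          (P *ᵥ y) i / Real.sqrt (P i i) ≤ sigeps * q).card : ℝ) := by
      rw [← Finset.sum_boole]
      apply Finset.sum_le_sum
      intro i _
      by_cases h : (P *ᵥ y) i / Real.sqrt (P i i) ≤ sigeps * q
      · rw [if_pos h]; exact hplus_le_one hδ _
      · rw [if_neg h]
        push_neg at h
        have : q - ρ i 0 ≤ 0 := by
          rw [hρ0 i]
          have h2 : sigeps⁻¹ * (sigeps * q) < sigeps⁻¹ * ((P *ᵥ y) i / Real.sqrt (P i i)) :=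
            mul_lt_mul_of_pos_left h (by positivity)
          rw [inv_mul_cancel_left₀ hsig.ne'] at h2
          linarith
        rw [hplus_of_nonpos hδ this]
    have : φ 0 ≤ (1 / (n : ℝ)) *
        ((Finset.univ.filter fun i : Fin n =>
          (P *ᵥ y) i / Real.sqrt (P i i) ≤ sigeps * q).card : ℝ) := by
      rw [hφ]
      apply mul_le_mul_of_nonneg_left hsum (by positivity)
    calc φ 0 ≤ _ := this
      _ < a := by
        rw [div_mul_eq_mul_div, one_mul, div_lt_iff₀ hnR]
        linarith [hke]
  -- behavior at infinity
  have hρtend : ∀ i, Filter.Tendsto (fun s => ρ i s) Filter.atTop (nhds 0) := by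
    intro i
    set g : ℝ → Matrix (Fin n) (Fin n) ℝ := fun u => R + u • 1 with hg
    have hgcont : Continuous g := continuous_const.add (continuous_id.smul continuous_const)
    have hg0 : g 0 = R := by simp [hg]
    have hgpd : ∀ u : ℝ, 0 ≤ u → (g u).PosDef := fun u hu =>
      Matrix.PosDef.add_posSemidef hR (posSemidef_smul hu Matrix.PosDef.one.posSemidef)
    have hgd : ∀ u : ℝ, 0 ≤ u → 0 < Kbar F (g u) i i := fun u hu =>
      Kbar_diag_pos hF (hgpd u hu) (hH2 i)
    set r : ℝ → ℝ := fun u => (Kbar F (g u) *ᵥ y) i / Real.sqrt (Kbar F (g u) i i) with hr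
    have hrcont : ContinuousAt r 0 :=
      ratio_continuousAt hF hgcont (by rw [hg0]; exact hR) (hgd 0 le_rfl) y
    have hu : Filter.Tendsto (fun s : ℝ => sigeps ^ 2 / s) Filter.atTop (nhds 0) := by
      have h := tendsto_inv_atTop_zero (𝕜 := ℝ)
      have h2 := h.const_mul (sigeps ^ 2)
      simpa [div_eq_mul_inv] using h2
    have hrc : Filter.Tendsto (fun s : ℝ => r (sigeps ^ 2 / s)) Filter.atTop (nhds (r 0)) :=
      (hrcont.tendsto.comp hu : _)
    have hsq : Filter.Tendsto (fun s : ℝ => Real.sqrt (s⁻¹)) Filter.atTop (nhds 0) := by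
      have h := (Real.continuous_sqrt.tendsto 0).comp (tendsto_inv_atTop_zero (𝕜 := ℝ))
      simpa [Function.comp_def] using h
    have hprod : Filter.Tendsto (fun s : ℝ => Real.sqrt (s⁻¹) * r (sigeps ^ 2 / s))
        Filter.atTop (nhds 0) := by
      have h := hsq.mul hrc
      simpa using h
    refine hprod.congr' ?_
    filter_upwards [Filter.eventually_gt_atTop 0] with s hs
    have huge : (0 : ℝ) ≤ sigeps ^ 2 / s := (div_pos hσ2pos hs).le
    have hKs : Kbar F (KK s) = s⁻¹ • Kbar F (g (sigeps ^ 2 / s)) := by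
      have hKKs : KK s = s • g (sigeps ^ 2 / s) := by
        rw [hg]
        simp only [smul_add, smul_smul]
        rw [mul_div_cancel₀ _ hs.ne']
      rw [hKKs, Kbar_smul hF hs (hgpd _ huge)]
    have hD : 0 < Kbar F (g (sigeps ^ 2 / s)) i i := hgd _ huge
    have hss : Real.sqrt s ≠ 0 := (Real.sqrt_pos.2 hs).ne'
    have hDs : Real.sqrt (Kbar F (g (sigeps ^ 2 / s)) i i) ≠ 0 := (Real.sqrt_pos.2 hD).ne'
    simp only [hρ, hr, hKs, smul_mulVec, Pi.smul_apply, smul_eq_mul, Matrix.smul_apply]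
    rw [Real.sqrt_mul (by positivity)]
    set A := (Kbar F (g (sigeps ^ 2 / s)) *ᵥ y) i with hA
    set D := Kbar F (g (sigeps ^ 2 / s)) i i with hDdef
    set t := Real.sqrt (s⁻¹) with ht
    have htpos : 0 < t := Real.sqrt_pos.2 (by positivity)
    have htt : t * t = s⁻¹ := Real.mul_self_sqrt (by positivity)
    rw [← htt]
    have hDs' : Real.sqrt D ≠ 0 := hDs
    field_simp
  have hev : ∀ᶠ s in Filter.atTop, ∀ i, ρ i s < q - δ :=
    Filter.eventually_all.2 fun i => (hρtend i).eventually_lt_const (by linarith)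
  obtain ⟨S, hS⟩ := ((Filter.eventually_gt_atTop 0).and hev).exists
  obtain ⟨hS1, hS2⟩ := hS
  have hφS : φ S = 1 := by
    rw [hφ]
    have : ∀ i : Fin n, hplus δ (q - ρ i S) = 1 := fun i =>
      hplus_of_gt (by have := hS2 i; linarith)
    simp only [this, Finset.sum_const, Finset.card_univ, Fintype.card_fin, nsmul_eq_mul,
      mul_one]
    field_simp
  -- IVT
  have hIVT := intermediate_value_Ioc hS1.le (fun s hs => (hφcont s hs.1).continuousWithinAt)
  have haIoc : a ∈ Set.Ioc (φ 0) (φ S) := ⟨hφ0, by rw [hφS]; exact ha2.le⟩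
  obtain ⟨s, hs, hsa⟩ := hIVT haIoc
  refine ⟨s, hs.1, ?_⟩
  rw [psiPlus]
  exact hsa
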